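/- Let N = (V, E, c) be a balanced directed network with boundary vertices ∂V ⊆ V, let I, J ⊆ ∂V be disjoint, and let K = ∂V ∖ (I ∪ J). Then the following are equivalent: (i) there exists a multi-cycle flow ℭ(I, J) with f_{ℭ(I,J)}(I, I^c) = S(I) and f_{ℭ(I,J)}(I∪J, (I∪J)^c) = S(I∪J) simultaneously; (ii) there exist a multi-cycle flow ℭ(I∪J) with f_{ℭ(I∪J)}(I∪J, (I∪J)^c) = S(I∪J), a multi-cycle flow ℭ(I) with f_{ℭ(I)}(I, I^c) = S(I), and a multi-cycle flow ℭ that is a multi-cycle subflow of both ℭ(I∪J) and ℭ(I), such that in the residual network Res(N, ℭ) no vertex of I is joined to any vertex of K by a path in the underlying undirected graph formed by the edges of strictly positive residual capacity. -/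

import Mathlib

open scoped Classical
set_option linter.unusedSectionVars false
set_option linter.unusedVariables false

/-- An edge cycle: a nonempty cyclically ordered sequence of distinct directed
edges (each a source-target pair) with the target of each edge equal to the
source of the next (cyclically). -/
structure EdgeCycle (V : Type*) where
  n : ℕ
  npos : 0 < n
  edge : Fin n → V × V
  inj : Function.Injective edge
  chain : ∀ i : Fin n, (edge i).2 = (edge ⟨(i.val + 1) % n, Nat.mod_lt _ npos⟩).1

/-- Membership of a directed edge in an edge cycle. -/
def EdgeCycle.Mem {V : Type*} (C : EdgeCycle V) (e : V × V) : Prop :=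
  ∃ i, C.edge i = e

/-- The cycle visits a vertex of `S`: some edge of the cycle has its target in `S`. -/
def EdgeCycle.Visits {V : Type*} (C : EdgeCycle V) (S : Finset V) : Prop :=
  ∃ i, (C.edge i).2 ∈ S

/-- A simple cycle flow: an edge cycle together with a nonnegative flux. -/
structure CycleFlow (V : Type*) where
  cyc : EdgeCycle V
  flux : ℝ
  flux_nonneg : 0 ≤ flux

/-- The total load that a finite family of simple cycle flows places on the
directed edge `(u, v)`. -/
noncomputable def edgeLoad {V : Type*} (F : List (CycleFlow V)) (u v : V) : ℝ :=
  (F.map (fun C => if C.cyc.Mem (u, v) then C.flux else 0)).sum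

/-- A finite family of simple cycle flows is a multi-cycle flow on the network
with capacity function `c` if on every edge the total load is at most the capacity. -/
def Feasible {V : Type*} (c : V → V → ℝ) (F : List (CycleFlow V)) : Prop :=
  ∀ u v, edgeLoad F u v ≤ c u v

/-- The flux of a multi-cycle flow between two (disjoint) vertex sets `I` and `J`:
the sum of the fluxes of those simple cycle flows visiting both a vertex of `I`
and a vertex of `J`. -/
noncomputable def mflux {V : Type*} (F : List (CycleFlow V)) (I J : Finset V) : ℝ :=
  (F.map (fun C => if C.cyc.Visits I ∧ C.cyc.Visits J then C.flux else 0)).sum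

/-- The cycle-flow entropy of a subset `I` of the boundary vertices `bdry`:
the maximal flux between `I` and its boundary complement over all
multi-cycle flows. -/
noncomputable def entropy {V : Type*} (c : V → V → ℝ) (bdry I : Finset V) : ℝ :=
  sSup { x | ∃ F : List (CycleFlow V), Feasible c F ∧ mflux F I (bdry \ I) = x }

/-- A network is balanced if at every vertex the total capacity of ingoing edges
equals the total capacity of outgoing edges. -/
def BalancedNet {V : Type*} [Fintype V] (c : V → V → ℝ) : Prop :=
  ∀ v : V, (∑ u, c u v) = ∑ u, c v u

/-- The residual capacity function of a network `c` with respect to a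
multi-cycle flow `F`. -/
noncomputable def resid {V : Type*} (c : V → V → ℝ) (F : List (CycleFlow V)) : V → V → ℝ :=
  fun u v => c u v - edgeLoad F u v

/-- `F'` is a multi-cycle subflow of `F`: same edge cycles, smaller fluxes. -/
def Subflow {V : Type*} (F' F : List (CycleFlow V)) : Prop :=
  List.Forall₂ (fun C' C => C'.cyc = C.cyc ∧ C'.flux ≤ C.flux) F' F

/-- The nesting property: for every pair of disjoint boundary subsets `I`, `J`
there is a single multi-cycle flow simultaneously maximizing the flux through
`I` and through `I ∪ J`. -/
def Nesting {V : Type*} (c : V → V → ℝ) (bdry : Finset V) : Prop :=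
  ∀ I J : Finset V, I ⊆ bdry → J ⊆ bdry → Disjoint I J →
    ∃ F : List (CycleFlow V), Feasible c F ∧
      mflux F I (bdry \ I) = entropy c bdry I ∧
      mflux F (I ∪ J) (bdry \ (I ∪ J)) = entropy c bdry (I ∪ J)

section Lemmas
variable {V : Type*} [Fintype V]

lemma list_sum_map_fin {α : Type*} (l : List α) (g : α → ℝ) :
    (l.map g).sum = ∑ i : Fin l.length, g (l.get i) := by
  conv_lhs => rw [← List.ofFn_get l]
  rw [List.map_ofFn, List.sum_ofFn]
  rfl

lemma edgeLoad_eq_sum (F : List (CycleFlow V)) (u v : V) :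
    edgeLoad F u v = ∑ i : Fin F.length,
      (if (F.get i).cyc.Mem (u, v) then (F.get i).flux else 0) := by
  rw [edgeLoad, list_sum_map_fin]

lemma mflux_eq_sum (F : List (CycleFlow V)) (I J : Finset V) :
    mflux F I J = ∑ i : Fin F.length,
      (if (F.get i).cyc.Visits I ∧ (F.get i).cyc.Visits J then (F.get i).flux else 0) := by
  rw [mflux, list_sum_map_fin]

lemma edgeLoad_nonneg (F : List (CycleFlow V)) (u v : V) : 0 ≤ edgeLoad F u v := by
  rw [edgeLoad_eq_sum]
  refine Finset.sum_nonneg fun i _ => ?_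
  split
  · exact (F.get i).flux_nonneg
  · exact le_refl 0

lemma edgeLoad_append (F G : List (CycleFlow V)) (u v : V) :
    edgeLoad (F ++ G) u v = edgeLoad F u v + edgeLoad G u v := by
  simp [edgeLoad]

lemma mflux_append (F G : List (CycleFlow V)) (I J : Finset V) :
    mflux (F ++ G) I J = mflux F I J + mflux G I J := by
  simp [mflux]

lemma resid_nonneg {c : V → V → ℝ} {F : List (CycleFlow V)} (hF : Feasible c F) (u v : V) :
    0 ≤ resid c F u v := sub_nonneg.2 (hF u v)

end Lemmas

section Lemmas2
variable {V : Type*} [Fintype V]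

lemma mflux_le_sum_flux (F : List (CycleFlow V)) (I J : Finset V) :
    mflux F I J ≤ (F.map CycleFlow.flux).sum := by
  rw [mflux_eq_sum, list_sum_map_fin]
  refine Finset.sum_le_sum fun i _ => ?_
  split
  · exact le_refl _
  · exact (F.get i).flux_nonneg

lemma edge_mem_self (C : EdgeCycle V) (i : Fin C.n) : C.Mem (C.edge i) := ⟨i, rfl⟩

lemma sum_flux_le_total_load (F : List (CycleFlow V)) :
    (F.map CycleFlow.flux).sum ≤ ∑ u : V, ∑ v : V, edgeLoad F u v := by
  have h : ∀ u v, edgeLoad F u v = ∑ i : Fin F.length,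
      (if (F.get i).cyc.Mem (u, v) then (F.get i).flux else 0) := edgeLoad_eq_sum F
  calc (F.map CycleFlow.flux).sum
      = ∑ i : Fin F.length, (F.get i).flux := list_sum_map_fin F _
    _ ≤ ∑ i : Fin F.length, ∑ u : V, ∑ v : V,
        (if (F.get i).cyc.Mem (u, v) then (F.get i).flux else 0) := by
        refine Finset.sum_le_sum fun i _ => ?_
        refine le_trans ?_ (le_of_eq (Fintype.sum_prod_type
          (f := fun p : V × V => if (F.get i).cyc.Mem p then (F.get i).flux else 0)))
        have hm : (F.get i).cyc.Mem ((F.get i).cyc.edge ⟨0, (F.get i).cyc.npos⟩) :=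
          edge_mem_self _ _
        calc (F.get i).flux
            = (if (F.get i).cyc.Mem (((F.get i).cyc.edge ⟨0, (F.get i).cyc.npos⟩).1,
                ((F.get i).cyc.edge ⟨0, (F.get i).cyc.npos⟩).2) then (F.get i).flux else 0) := by
              rw [if_pos]; exact hm
          _ ≤ ∑ p : V × V, (if (F.get i).cyc.Mem (p.1, p.2) then (F.get i).flux else 0) := by
              refine Finset.single_le_sum (f := fun p : V × V =>
                (if (F.get i).cyc.Mem (p.1, p.2) then (F.get i).flux else 0)) ?_ (Finset.mem_univ _)
              intro p _
              split
              · exact (F.get i).flux_nonneg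
              · exact le_refl 0
    _ = ∑ u : V, ∑ i : Fin F.length, ∑ v : V,
        (if (F.get i).cyc.Mem (u, v) then (F.get i).flux else 0) := Finset.sum_comm
    _ = ∑ u : V, ∑ v : V, ∑ i : Fin F.length,
        (if (F.get i).cyc.Mem (u, v) then (F.get i).flux else 0) :=
        Finset.sum_congr rfl fun u _ => Finset.sum_comm
    _ = ∑ u : V, ∑ v : V, edgeLoad F u v :=
        Finset.sum_congr rfl fun u _ => Finset.sum_congr rfl fun v _ => (h u v).symm

lemma entropy_bddAbove (c : V → V → ℝ) (bdry I : Finset V) :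
    BddAbove { x | ∃ F : List (CycleFlow V), Feasible c F ∧ mflux F I (bdry \ I) = x } := by
  refine ⟨∑ u : V, ∑ v : V, c u v, fun x hx => ?_⟩
  obtain ⟨F, hF, rfl⟩ := hx
  calc mflux F I (bdry \ I) ≤ (F.map CycleFlow.flux).sum := mflux_le_sum_flux F _ _
    _ ≤ ∑ u : V, ∑ v : V, edgeLoad F u v := sum_flux_le_total_load F
    _ ≤ ∑ u : V, ∑ v : V, c u v :=
        Finset.sum_le_sum fun u _ => Finset.sum_le_sum fun v _ => hF u v

lemma mflux_le_entropy {c : V → V → ℝ} {F : List (CycleFlow V)} (hF : Feasible c F)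
    (bdry I : Finset V) : mflux F I (bdry \ I) ≤ entropy c bdry I :=
  le_csSup (entropy_bddAbove c bdry I) ⟨F, hF, rfl⟩

end Lemmas2
section Lemmas3
variable {V : Type*} [Fintype V]

/-- nodup chain extraction -/
lemma exists_nodup_chain {α : Type*} {r : α → α → Prop} {a b : α}
    (h : Relation.ReflTransGen r a b) :
    ∃ l : List α, l ≠ [] ∧ l.head? = some a ∧ l.getLast? = some b ∧
      l.Chain' r ∧ l.Nodup := by
  induction h using Relation.ReflTransGen.head_induction_on with
  | refl => exact ⟨[b], by simp, rfl, rfl, List.isChain_singleton b, List.nodup_singleton b⟩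
  | head hxy hyb ih =>
    rename_i x y
    obtain ⟨l, hne, hhead, hlast, hchain, hnodup⟩ := ih
    by_cases hx : x ∈ l
    · obtain ⟨s, t, rfl⟩ := List.append_of_mem hx
      rcases eq_or_ne t [] with rfl | ht
      · refine ⟨[x], by simp, rfl, ?_, List.isChain_singleton x, List.nodup_singleton x⟩
        rw [List.getLast?_append_of_ne_nil s (by simp)] at hlast
        simpa using hlast
      · refine ⟨x :: t, by simp, rfl, ?_, ?_, ?_⟩
        · rwa [List.getLast?_append_of_ne_nil s (by simp)] at hlast
        · exact hchain.suffix ⟨s, rfl⟩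
        · exact hnodup.sublist (List.sublist_append_right s (x :: t))
    · refine ⟨x :: l, by simp, rfl, ?_, ?_, ?_⟩
      · rw [List.getLast?_cons, hlast]; rfl
      · show List.IsChain r (x :: l)
        rw [List.isChain_cons]
        refine ⟨?_, hchain⟩
        intro z hz
        rw [hhead] at hz
        cases hz
        exact hxy
      · exact List.nodup_cons.2 ⟨hx, hnodup⟩

end Lemmas3
section Lemmas4
variable {V : Type*} [Fintype V]

/-- rotation map of a cycle -/
def EdgeCycle.step {V : Type*} (C : EdgeCycle V) (i : Fin C.n) : Fin C.n :=
  ⟨(i.val + 1) % C.n, Nat.mod_lt _ C.npos⟩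

lemma EdgeCycle.step_bijective {V : Type*} (C : EdgeCycle V) : Function.Bijective C.step := by
  rw [Fintype.bijective_iff_injective_and_card]
  refine ⟨fun i j hij => ?_, rfl⟩
  have hi := i.isLt; have hj := j.isLt
  have h : (i.val + 1) % C.n = (j.val + 1) % C.n := congrArg Fin.val hij
  have e1 : (i.val + 1) % C.n = if i.val + 1 = C.n then 0 else i.val + 1 := by
    split
    · simp_all
    · exact Nat.mod_eq_of_lt (by omega)
  have e2 : (j.val + 1) % C.n = if j.val + 1 = C.n then 0 else j.val + 1 := by
    split
    · simp_all
    · exact Nat.mod_eq_of_lt (by omega)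
  rw [e1, e2] at h
  apply Fin.ext
  split at h <;> split at h <;> omega

lemma EdgeCycle.chain_step {V : Type*} (C : EdgeCycle V) (i : Fin C.n) :
    (C.edge i).2 = (C.edge (C.step i)).1 := C.chain i

/-- per-cycle vertex balance: number of ingoing = number of outgoing edges -/
lemma cycle_balance (C : EdgeCycle V) (lam : ℝ) (v : V) :
    (∑ u : V, if C.Mem (u, v) then lam else 0) = ∑ u : V, if C.Mem (v, u) then lam else 0 := by
  classical
  have h1 : (∑ u : V, if C.Mem (u, v) then lam else 0)
      = (Finset.univ.filter fun u => C.Mem (u, v)).card • lam := by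
    rw [← Finset.sum_filter, Finset.sum_const]
  have h2 : (∑ u : V, if C.Mem (v, u) then lam else 0)
      = (Finset.univ.filter fun u => C.Mem (v, u)).card • lam := by
    rw [← Finset.sum_filter, Finset.sum_const]
  rw [h1, h2]
  congr 1
  -- in-card = #targets = #sources = out-card
  have hin : (Finset.univ.filter fun u => C.Mem (u, v)).card
      = (Finset.univ.filter fun i : Fin C.n => (C.edge i).2 = v).card := by
    refine (Finset.card_bij (fun i _ => (C.edge i).1) ?_ ?_ ?_).symm
    · intro i hi
      simp only [Finset.mem_filter, Finset.mem_univ, true_and] at hi ⊢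
      exact ⟨i, by rw [← hi]⟩
    · intro i hi j hj hij
      simp only [Finset.mem_filter, Finset.mem_univ, true_and] at hi hj
      apply C.inj
      exact Prod.ext hij (hi.trans hj.symm)
    · intro u hu
      simp only [Finset.mem_filter, Finset.mem_univ, true_and] at hu
      obtain ⟨i, hi⟩ := hu
      exact ⟨i, by simp [Finset.mem_filter, hi], by simp [hi]⟩
  have hout : (Finset.univ.filter fun u => C.Mem (v, u)).card
      = (Finset.univ.filter fun i : Fin C.n => (C.edge i).1 = v).card := by
    refine (Finset.card_bij (fun i _ => (C.edge i).2) ?_ ?_ ?_).symm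
    · intro i hi
      simp only [Finset.mem_filter, Finset.mem_univ, true_and] at hi ⊢
      exact ⟨i, by rw [← hi]⟩
    · intro i hi j hj hij
      simp only [Finset.mem_filter, Finset.mem_univ, true_and] at hi hj
      apply C.inj
      exact Prod.ext (hi.trans hj.symm) hij
    · intro u hu
      simp only [Finset.mem_filter, Finset.mem_univ, true_and] at hu
      obtain ⟨i, hi⟩ := hu
      exact ⟨i, by simp [Finset.mem_filter, hi], by simp [hi]⟩
  rw [hin, hout]
  refine Finset.card_bij (fun i _ => C.step i) ?_ ?_ ?_
  · intro i hi
    simp only [Finset.mem_filter, Finset.mem_univ, true_and] at hi ⊢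
    rw [← C.chain_step i, hi]
  · intro i _ j _ hij
    exact C.step_bijective.1 hij
  · intro j hj
    simp only [Finset.mem_filter, Finset.mem_univ, true_and] at hj
    obtain ⟨i, rfl⟩ := C.step_bijective.2 j
    refine ⟨i, ?_, rfl⟩
    simp only [Finset.mem_filter, Finset.mem_univ, true_and]
    rw [C.chain_step i, hj]

lemma balanced_resid {c : V → V → ℝ} (hbal : BalancedNet c) (F : List (CycleFlow V)) :
    BalancedNet (resid c F) := by
  intro v
  simp only [resid]
  rw [Finset.sum_sub_distrib, Finset.sum_sub_distrib, hbal v]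
  congr 1
  induction F with
  | nil => simp [edgeLoad]
  | cons C G ih =>
    have h1 : ∀ u w, edgeLoad (C :: G) u w
        = (if C.cyc.Mem (u, w) then C.flux else 0) + edgeLoad G u w := by
      intro u w; simp [edgeLoad]
    simp only [h1]
    rw [Finset.sum_add_distrib, Finset.sum_add_distrib, ih, cycle_balance C.cyc C.flux v]

end Lemmas4
section Lemmas5
variable {V : Type*} [Fintype V]

lemma reach_back {c : V → V → ℝ} (hc : ∀ u v, 0 ≤ c u v) (hbal : BalancedNet c)
    {u v : V} (huv : 0 < c u v) :
    Relation.ReflTransGen (fun x y => 0 < c x y) v u := by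
  classical
  by_contra hcon
  set S : Finset V := Finset.univ.filter
    (fun w => Relation.ReflTransGen (fun x y => 0 < c x y) v w) with hS
  have hvS : v ∈ S := Finset.mem_filter.2 ⟨Finset.mem_univ _, Relation.ReflTransGen.refl⟩
  have huS : u ∉ S := by simp [hS, hcon]
  have key : ∀ w ∈ S, ∀ x ∈ Sᶜ, c w x = 0 := by
    intro w hw x hx
    by_contra hne
    have hpos : 0 < c w x := lt_of_le_of_ne (hc w x) (Ne.symm hne)
    simp only [hS, Finset.mem_filter, Finset.mem_univ, true_and] at hw
    have : x ∈ S := by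
      simp only [hS, Finset.mem_filter, Finset.mem_univ, true_and]
      exact hw.tail hpos
    rw [Finset.mem_compl] at hx
    exact hx this
  have hsum : ∑ w ∈ S, ∑ x : V, c x w = ∑ w ∈ S, ∑ x : V, c w x :=
    Finset.sum_congr rfl fun w _ => hbal w
  have hsplit : ∀ f : V → V → ℝ, ∑ w ∈ S, ∑ x : V, f x w
      = (∑ w ∈ S, ∑ x ∈ S, f x w) + ∑ w ∈ S, ∑ x ∈ Sᶜ, f x w := by
    intro f
    rw [← Finset.sum_add_distrib]
    refine Finset.sum_congr rfl fun w _ => ?_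
    rw [Finset.sum_add_sum_compl]
  have hsplit2 : ∑ w ∈ S, ∑ x : V, c w x
      = (∑ w ∈ S, ∑ x ∈ S, c w x) + ∑ w ∈ S, ∑ x ∈ Sᶜ, c w x := by
    rw [← Finset.sum_add_distrib]
    refine Finset.sum_congr rfl fun w _ => ?_
    rw [Finset.sum_add_sum_compl]
  have hcomm : (∑ w ∈ S, ∑ x ∈ S, c x w) = ∑ w ∈ S, ∑ x ∈ S, c w x := Finset.sum_comm
  rw [hsplit c, hsplit2, hcomm] at hsum
  have hcancel : (∑ w ∈ S, ∑ x ∈ Sᶜ, c x w) = ∑ w ∈ S, ∑ x ∈ Sᶜ, c w x :=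
    add_left_cancel hsum
  have hrhs : (∑ w ∈ S, ∑ x ∈ Sᶜ, c w x) = 0 := by
    refine Finset.sum_eq_zero fun w hw => Finset.sum_eq_zero fun x hx => key w hw x hx
  have hlhs : c u v ≤ ∑ w ∈ S, ∑ x ∈ Sᶜ, c x w := by
    have h1 : c u v ≤ ∑ x ∈ Sᶜ, c x v := by
      refine Finset.single_le_sum (fun x _ => hc x v) ?_
      rwa [Finset.mem_compl]
    refine le_trans h1 ?_
    refine Finset.single_le_sum (f := fun w => ∑ x ∈ Sᶜ, c x w) ?_ hvS
    intro w _
    exact Finset.sum_nonneg fun x _ => hc x w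
  rw [hcancel, hrhs] at hlhs
  exact absurd (lt_of_lt_of_le huv hlhs) (lt_irrefl 0)

lemma exists_cycle_of_pos {c : V → V → ℝ} (hc : ∀ u v, 0 ≤ c u v) (hbal : BalancedNet c)
    {u v : V} (huv : 0 < c u v) :
    ∃ C : EdgeCycle V, C.Mem (u, v) ∧ ∀ i, 0 < c (C.edge i).1 (C.edge i).2 := by
  obtain ⟨l, hne, hhead, hlast, hchain, hnodup⟩ := exists_nodup_chain (reach_back hc hbal huv)
  have hm : 0 < l.length := List.length_pos_iff.2 hne
  have hget0 : l.get ⟨0, hm⟩ = v := by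
    rw [List.head?_eq_head hne] at hhead
    have := Option.some_injective _ hhead
    rw [List.get_eq_getElem, ← List.head_eq_getElem_zero hne, this]
  have hlm : l.length - 1 < l.length := Nat.sub_lt hm Nat.one_pos
  have hgetlast : l.get ⟨l.length - 1, hlm⟩ = u := by
    rw [List.getLast?_eq_getLast_of_ne_nil hne] at hlast
    have := Option.some_injective _ hlast
    rw [List.get_eq_getElem, ← List.getLast_eq_getElem hne, this]
  have hmod : (l.length - 1 + 1) % l.length = 0 := by
    rw [Nat.sub_add_cancel hm, Nat.mod_self]
  set E : Fin l.length → V × V := fun i => (l.get i, l.get ⟨(i.val + 1) % l.length,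
    Nat.mod_lt _ hm⟩) with hE
  have hinj : Function.Injective E := by
    intro i j hij
    exact List.nodup_iff_injective_get.1 hnodup (congrArg Prod.fst hij)
  refine ⟨⟨l.length, hm, E, hinj, fun i => rfl⟩, ?_, ?_⟩
  · refine ⟨⟨l.length - 1, hlm⟩, ?_⟩
    have h2 : (⟨(l.length - 1 + 1) % l.length, Nat.mod_lt _ hm⟩ : Fin l.length)
        = ⟨0, hm⟩ := Fin.ext hmod
    show (l.get ⟨l.length - 1, hlm⟩, l.get ⟨(l.length - 1 + 1) % l.length,
      Nat.mod_lt _ hm⟩) = (u, v)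
    rw [h2, hget0, hgetlast]
  · intro i
    have hiv : i.val < l.length := i.isLt
    show 0 < c (l.get ⟨i.val, hiv⟩) (l.get ⟨(i.val + 1) % l.length, Nat.mod_lt _ hm⟩)
    rcases Nat.lt_or_ge (i.val + 1) l.length with hlt | hge
    · have h3 := List.isChain_iff_getElem.1 hchain i.val (by omega)
      have h4 : (⟨(i.val + 1) % l.length, Nat.mod_lt _ hm⟩ : Fin l.length)
          = ⟨i.val + 1, hlt⟩ := Fin.ext (Nat.mod_eq_of_lt hlt)
      rw [h4]
      exact h3
    · have hi1 : i.val = l.length - 1 := by omega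
      have h2 : (⟨(i.val + 1) % l.length, Nat.mod_lt _ hm⟩ : Fin l.length)
          = ⟨0, hm⟩ := Fin.ext (by rw [hi1]; exact hmod)
      have h5 : (⟨i.val, hiv⟩ : Fin l.length) = ⟨l.length - 1, hlm⟩ := Fin.ext hi1
      rw [h2, h5, hget0, hgetlast]
      exact huv

end Lemmas5
section Lemmas6
variable {V : Type*} [Fintype V]

lemma edgeLoad_single (C : CycleFlow V) (u v : V) :
    edgeLoad [C] u v = if C.cyc.Mem (u, v) then C.flux else 0 := by
  simp [edgeLoad]

lemma mflux_single (C : CycleFlow V) (I J : Finset V) :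
    mflux [C] I J = if C.cyc.Visits I ∧ C.cyc.Visits J then C.flux else 0 := by
  simp [mflux]

lemma improve {c : V → V → ℝ} (hc : ∀ u v, 0 ≤ c u v) (hbal : BalancedNet c)
    (bdry I J : Finset V) :
    ∀ n : ℕ, ∀ F : List (CycleFlow V), Feasible c F →
      mflux F I (bdry \ I) = entropy c bdry I →
      mflux F (I ∪ J) (bdry \ (I ∪ J)) = entropy c bdry (I ∪ J) →
      (Finset.univ.filter (fun p : V × V => 0 < resid c F p.1 p.2)).card ≤ n →
      ∃ F' : List (CycleFlow V), Feasible c F' ∧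
        mflux F' I (bdry \ I) = entropy c bdry I ∧
        mflux F' (I ∪ J) (bdry \ (I ∪ J)) = entropy c bdry (I ∪ J) ∧
        ∀ a ∈ I, ∀ b ∈ bdry \ (I ∪ J),
          ¬ Relation.ReflTransGen (fun x y => 0 < resid c F' x y ∨ 0 < resid c F' y x) a b := by
  intro n
  induction n with
  | zero =>
    intro F hfeas h1 h2 hcard
    refine ⟨F, hfeas, h1, h2, ?_⟩
    intro a ha b hb hRT
    have hab : a ≠ b := by
      intro h
      subst h
      rw [Finset.mem_sdiff] at hb
      exact hb.2 (Finset.mem_union_left _ ha)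
    rcases Relation.ReflTransGen.cases_head hRT with h | ⟨x, hax, _⟩
    · exact hab h
    · have : ∃ p : V × V, 0 < resid c F p.1 p.2 := by
        rcases hax with h | h
        · exact ⟨(a, x), h⟩
        · exact ⟨(x, a), h⟩
      obtain ⟨p, hp⟩ := this
      have : p ∈ Finset.univ.filter (fun p : V × V => 0 < resid c F p.1 p.2) :=
        Finset.mem_filter.2 ⟨Finset.mem_univ _, hp⟩
      have := Finset.card_pos.2 ⟨p, this⟩
      omega
  | succ n ih =>
    intro F hfeas h1 h2 hcard
    by_cases hsep : ∀ a ∈ I, ∀ b ∈ bdry \ (I ∪ J),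
        ¬ Relation.ReflTransGen (fun x y => 0 < resid c F x y ∨ 0 < resid c F y x) a b
    · exact ⟨F, hfeas, h1, h2, hsep⟩
    · push_neg at hsep
      obtain ⟨a, ha, b, hb, hRT⟩ := hsep
      have hab : a ≠ b := by
        intro h
        subst h
        rw [Finset.mem_sdiff] at hb
        exact hb.2 (Finset.mem_union_left _ ha)
      have hpos : ∃ p : V × V, 0 < resid c F p.1 p.2 := by
        rcases Relation.ReflTransGen.cases_head hRT with h | ⟨x, hax, _⟩
        · exact absurd h hab
        · rcases hax with h | h
          · exact ⟨(a, x), h⟩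
          · exact ⟨(x, a), h⟩
      obtain ⟨p, hp⟩ := hpos
      obtain ⟨C, hmem, hposall⟩ := exists_cycle_of_pos
        (fun u v => resid_nonneg hfeas u v) (balanced_resid hbal F) hp
      obtain ⟨i0, _, hi0⟩ := Finset.exists_min_image Finset.univ
        (fun i => resid c F (C.edge i).1 (C.edge i).2) ⟨⟨0, C.npos⟩, Finset.mem_univ _⟩
      set eps := resid c F (C.edge i0).1 (C.edge i0).2 with heps
      have heps_pos : 0 < eps := hposall i0
      set F' := F ++ [⟨C, eps, le_of_lt heps_pos⟩] with hF'
      have hload : ∀ u v, edgeLoad F' u v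
          = edgeLoad F u v + (if C.Mem (u, v) then eps else 0) := by
        intro u v
        rw [hF', edgeLoad_append, edgeLoad_single]
      have hresid' : ∀ u v, resid c F' u v
          = resid c F u v - (if C.Mem (u, v) then eps else 0) := by
        intro u v
        simp only [resid, hload]
        ring
      have heps_le : ∀ u v, C.Mem (u, v) → eps ≤ resid c F u v := by
        intro u v huv
        obtain ⟨i, hi⟩ := huv
        have := hi0 i (Finset.mem_univ _)
        rwa [hi] at this
      have hfeas' : Feasible c F' := by
        intro u v
        rw [hload]
        by_cases hM : C.Mem (u, v)
        · rw [if_pos hM]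
          have := heps_le u v hM
          simp only [resid] at this
          linarith
        · rw [if_neg hM, add_zero]
          exact hfeas u v
      have hmf : ∀ X Y : Finset V, mflux F' X Y
          = mflux F X Y + (if C.Visits X ∧ C.Visits Y then eps else 0) := by
        intro X Y
        rw [hF', mflux_append, mflux_single]
      have key : ∀ X : Finset V, mflux F X (bdry \ X) = entropy c bdry X →
          mflux F' X (bdry \ X) = entropy c bdry X := by
        intro X hX
        have hle := mflux_le_entropy hfeas' bdry X
        rw [hmf] at hle ⊢
        by_cases hvis : C.Visits X ∧ C.Visits (bdry \ X)
        · rw [if_pos hvis] at hle ⊢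
          rw [hX] at hle
          linarith
        · rw [if_neg hvis, add_zero]
          exact hX
      have hss : (Finset.univ.filter (fun p : V × V => 0 < resid c F' p.1 p.2))
          ⊂ (Finset.univ.filter (fun p : V × V => 0 < resid c F p.1 p.2)) := by
        constructor
        · intro q hq
          rw [Finset.mem_filter] at hq ⊢
          refine ⟨Finset.mem_univ _, ?_⟩
          have := hq.2
          rw [hresid'] at this
          split at this
          · linarith
          · linarith
        · intro hsub
          have hin : (C.edge i0) ∈ Finset.univ.filter
              (fun p : V × V => 0 < resid c F p.1 p.2) := by
            rw [Finset.mem_filter]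
            exact ⟨Finset.mem_univ _, heps_pos⟩
          have hnotin : (C.edge i0) ∉ Finset.univ.filter
              (fun p : V × V => 0 < resid c F' p.1 p.2) := by
            rw [Finset.mem_filter]
            rintro ⟨-, hpos'⟩
            rw [hresid'] at hpos'
            rw [if_pos ⟨i0, rfl⟩] at hpos'
            rw [← heps] at hpos'
            simp at hpos'
          exact hnotin (hsub hin)
      have hcard' : (Finset.univ.filter (fun p : V × V => 0 < resid c F' p.1 p.2)).card ≤ n := by
        have := Finset.card_lt_card hss
        omega
      exact ih F' hfeas' (key I h1) (key (I ∪ J) h2) hcard'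

end Lemmas6
section Lemmas7
variable {V : Type*} [Fintype V]

lemma EdgeCycle.step_iterate_val {α : Type*} (C : EdgeCycle α) (i : Fin C.n) (k : ℕ) :
    (C.step^[k] i).val = (i.val + k) % C.n := by
  induction k with
  | zero => simp [Nat.mod_eq_of_lt i.isLt]
  | succ k ih =>
    rw [Function.iterate_succ_apply']
    show ((C.step^[k] i).val + 1) % C.n = (i.val + (k + 1)) % C.n
    rw [ih, ← Nat.add_assoc]
    exact Nat.ModEq.add_right 1 (Nat.mod_modEq _ _)

lemma EdgeCycle.step_reach {α : Type*} (C : EdgeCycle α) (i j : Fin C.n) :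
    ∃ k : ℕ, C.step^[k] i = j := by
  refine ⟨C.n - i.val + j.val, Fin.ext ?_⟩
  rw [C.step_iterate_val]
  have h1 : i.val + (C.n - i.val + j.val) = C.n + j.val := by
    have := i.isLt
    omega
  rw [h1, Nat.add_mod_left, Nat.mod_eq_of_lt j.isLt]

lemma cycle_spread {α : Type*} {r : α → α → Prop} (hsymm : ∀ x y, r x y → r y x)
    {A : Set α} (hA : ∀ x y, x ∈ A → r x y → y ∈ A)
    {C : EdgeCycle α} (hpos : ∀ i, r (C.edge i).1 (C.edge i).2)
    (hT : ∃ i, (C.edge i).2 ∈ A) :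
    ∀ i, (C.edge i).1 ∈ A ∧ (C.edge i).2 ∈ A := by
  obtain ⟨i0, hi0⟩ := hT
  have hiter : ∀ k : ℕ, (C.edge (C.step^[k] i0)).2 ∈ A := by
    intro k
    induction k with
    | zero => simpa using hi0
    | succ k ih =>
      rw [Function.iterate_succ_apply']
      have hsrc : (C.edge (C.step (C.step^[k] i0))).1 ∈ A := by
        rw [← C.chain_step]
        exact ih
      exact hA _ _ hsrc (hpos _)
  have htgt : ∀ i, (C.edge i).2 ∈ A := by
    intro i
    obtain ⟨k, rfl⟩ := C.step_reach i0 i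
    exact hiter k
  intro i
  exact ⟨hA _ _ (htgt i) (hsymm _ _ (hpos i)), htgt i⟩

lemma edgeLoad_ofFn {n : ℕ} (g : Fin n → CycleFlow V) (u v : V) :
    edgeLoad (List.ofFn g) u v
      = ∑ i : Fin n, if (g i).cyc.Mem (u, v) then (g i).flux else 0 := by
  rw [edgeLoad, List.map_ofFn, List.sum_ofFn]
  rfl

lemma mflux_ofFn {n : ℕ} (g : Fin n → CycleFlow V) (I J : Finset V) :
    mflux (List.ofFn g) I J
      = ∑ i : Fin n, if (g i).cyc.Visits I ∧ (g i).cyc.Visits J then (g i).flux else 0 := by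
  rw [mflux, List.map_ofFn, List.sum_ofFn]
  rfl

lemma edgeLoad_reidx (G : List (CycleFlow V)) {m : ℕ} (h : m = G.length) (u v : V) :
    edgeLoad G u v = ∑ i : Fin m,
      if (G.get (Fin.cast h i)).cyc.Mem (u, v) then (G.get (Fin.cast h i)).flux
        else 0 := by
  rw [edgeLoad_eq_sum]
  exact (Fintype.sum_equiv (finCongr h)
    (fun i : Fin m => if (G.get (Fin.cast h i)).cyc.Mem (u, v)
      then (G.get (Fin.cast h i)).flux else 0)
    (fun i => if (G.get i).cyc.Mem (u, v) then (G.get i).flux else 0) (fun i => rfl)).symm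

lemma mflux_reidx (G : List (CycleFlow V)) {m : ℕ} (h : m = G.length) (I J : Finset V) :
    mflux G I J = ∑ i : Fin m,
      if (G.get (Fin.cast h i)).cyc.Visits I ∧ (G.get (Fin.cast h i)).cyc.Visits J
        then (G.get (Fin.cast h i)).flux else 0 := by
  rw [mflux_eq_sum]
  exact (Fintype.sum_equiv (finCongr h)
    (fun i : Fin m => if (G.get (Fin.cast h i)).cyc.Visits I ∧ (G.get (Fin.cast h i)).cyc.Visits J
      then (G.get (Fin.cast h i)).flux else 0)
    (fun i => if (G.get i).cyc.Visits I ∧ (G.get i).cyc.Visits J then (G.get i).flux else 0)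
    (fun i => rfl)).symm

lemma pos_term_of_pos_sum {n : ℕ} {g : Fin n → ℝ} (hpos : 0 < ∑ i, g i) :
    ∃ i, 0 < g i := by
  by_contra h
  push_neg at h
  exact absurd (lt_of_lt_of_le hpos (Finset.sum_nonpos fun i _ => h i)) (lt_irrefl 0)

end Lemmas7
section Lemmas8
variable {V : Type*} [Fintype V]

lemma backward {c : V → V → ℝ} (bdry I J : Finset V)
    (FIJ FI F0 : List (CycleFlow V))
    (hfIJ : Feasible c FIJ)
    (hmIJ : mflux FIJ (I ∪ J) (bdry \ (I ∪ J)) = entropy c bdry (I ∪ J))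
    (hfI : Feasible c FI)
    (hmI : mflux FI I (bdry \ I) = entropy c bdry I)
    (hsub1 : Subflow F0 FIJ) (hsub2 : Subflow F0 FI)
    (hsep : ∀ a ∈ I, ∀ b ∈ bdry \ (I ∪ J),
      ¬ Relation.ReflTransGen (fun x y => 0 < resid c F0 x y ∨ 0 < resid c F0 y x) a b) :
    ∃ F : List (CycleFlow V), Feasible c F ∧
      mflux F I (bdry \ I) = entropy c bdry I ∧
      mflux F (I ∪ J) (bdry \ (I ∪ J)) = entropy c bdry (I ∪ J) := by
  obtain ⟨r, hrdef⟩ : ∃ r : V → V → Prop,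
      r = fun x y => 0 < resid c F0 x y ∨ 0 < resid c F0 y x := ⟨_, rfl⟩
  obtain ⟨A, hAdef⟩ : ∃ A : Set V,
      A = {v | ∃ a ∈ I, Relation.ReflTransGen r a v} := ⟨_, rfl⟩
  have hsymm : ∀ x y, r x y → r y x := by
    intro x y h
    rw [hrdef] at h ⊢
    exact Or.symm h
  have hAcl : ∀ x y, x ∈ A → r x y → y ∈ A := by
    intro x y hx hxy
    rw [hAdef] at hx ⊢
    obtain ⟨a, ha, hax⟩ := hx
    exact ⟨a, ha, hax.tail hxy⟩
  have hIA : ∀ a ∈ I, a ∈ A := by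
    intro a ha
    rw [hAdef]
    exact ⟨a, ha, Relation.ReflTransGen.refl⟩
  have hKA : ∀ b ∈ bdry \ (I ∪ J), b ∉ A := by
    intro b hb hbA
    rw [hAdef] at hbA
    obtain ⟨a, ha, hab⟩ := hbA
    exact hsep a ha b hb (hrdef ▸ hab)
  have hlen1 : F0.length = FIJ.length := hsub1.length_eq
  have hlen2 : F0.length = FI.length := hsub2.length_eq
  have hget1 := (List.forall₂_iff_get.1 hsub1).2
  have hget2 := (List.forall₂_iff_get.1 hsub2).2
  obtain ⟨cyc, hcycdef⟩ : ∃ f : Fin F0.length → EdgeCycle V,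
      f = fun i => (F0.get i).cyc := ⟨_, rfl⟩
  obtain ⟨f0, hf0def⟩ : ∃ f : Fin F0.length → ℝ, f = fun i => (F0.get i).flux := ⟨_, rfl⟩
  obtain ⟨fI, hfIdef⟩ : ∃ f : Fin F0.length → ℝ,
      f = fun i => (FI.get (Fin.cast hlen2 i)).flux := ⟨_, rfl⟩
  obtain ⟨fIJ, hfIJdef⟩ : ∃ f : Fin F0.length → ℝ,
      f = fun i => (FIJ.get (Fin.cast hlen1 i)).flux := ⟨_, rfl⟩
  have hcycI : ∀ i : Fin F0.length, (FI.get (Fin.cast hlen2 i)).cyc = cyc i := by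
    intro i
    rw [hcycdef]
    exact ((hget2 i.val i.isLt (hlen2 ▸ i.isLt)).1).symm
  have hcycIJ : ∀ i : Fin F0.length, (FIJ.get (Fin.cast hlen1 i)).cyc = cyc i := by
    intro i
    rw [hcycdef]
    exact ((hget1 i.val i.isLt (hlen1 ▸ i.isLt)).1).symm
  have hleI : ∀ i : Fin F0.length, f0 i ≤ fI i := by
    intro i
    rw [hf0def, hfIdef]
    exact (hget2 i.val i.isLt (hlen2 ▸ i.isLt)).2
  have hleIJ : ∀ i : Fin F0.length, f0 i ≤ fIJ i := by
    intro i
    rw [hf0def, hfIJdef]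
    exact (hget1 i.val i.isLt (hlen1 ▸ i.isLt)).2
  obtain ⟨T, hTdef⟩ : ∃ p : EdgeCycle V → Prop,
      p = fun C => ∃ j, (C.edge j).2 ∈ A := ⟨_, rfl⟩
  obtain ⟨dI, hdIdef⟩ : ∃ d : Fin F0.length → ℝ,
      d = fun i => if T (cyc i) then fI i - f0 i else 0 := ⟨_, rfl⟩
  obtain ⟨dK, hdKdef⟩ : ∃ d : Fin F0.length → ℝ,
      d = fun i => if T (cyc i) then 0 else fIJ i - f0 i := ⟨_, rfl⟩
  have hdI0 : ∀ i, 0 ≤ dI i := by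
    intro i
    simp only [hdIdef]
    split_ifs
    · exact sub_nonneg.2 (hleI i)
    · exact le_refl 0
  have hdK0 : ∀ i, 0 ≤ dK i := by
    intro i
    simp only [hdKdef]
    split_ifs
    · exact le_refl 0
    · exact sub_nonneg.2 (hleIJ i)
  -- load formulas
  have hL0 : ∀ u v, edgeLoad F0 u v
      = ∑ i : Fin F0.length, if (cyc i).Mem (u, v) then f0 i else 0 := by
    intro u v
    rw [edgeLoad_eq_sum]
    exact Finset.sum_congr rfl fun i _ => by rw [hcycdef, hf0def]
  have hLI : ∀ u v, edgeLoad FI u v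
      = ∑ i : Fin F0.length, if (cyc i).Mem (u, v) then fI i else 0 := by
    intro u v
    rw [edgeLoad_reidx FI hlen2]
    exact Finset.sum_congr rfl fun i _ => by rw [hcycI, hfIdef]
  have hLIJ : ∀ u v, edgeLoad FIJ u v
      = ∑ i : Fin F0.length, if (cyc i).Mem (u, v) then fIJ i else 0 := by
    intro u v
    rw [edgeLoad_reidx FIJ hlen1]
    exact Finset.sum_congr rfl fun i _ => by rw [hcycIJ, hfIJdef]
  -- residual positivity propagation
  have keyres : ∀ (G : List (CycleFlow V)) (h : F0.length = G.length), Feasible c G →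
      (∀ u v, edgeLoad G u v = ∑ i : Fin F0.length,
        if (cyc i).Mem (u, v) then (G.get (Fin.cast h i)).flux else 0) →
      (∀ i : Fin F0.length, f0 i ≤ (G.get (Fin.cast h i)).flux) →
      ∀ i : Fin F0.length, 0 < (G.get (Fin.cast h i)).flux - f0 i →
      ∀ x y, (cyc i).Mem (x, y) → 0 < resid c F0 x y := by
    intro G h hfeasG hGload hleG i hpos x y hmem
    have hdiff : (G.get (Fin.cast h i)).flux - f0 i
        ≤ edgeLoad G x y - edgeLoad F0 x y := by
      rw [hGload, hL0, ← Finset.sum_sub_distrib]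
      have hterm : ∀ j : Fin F0.length, (0:ℝ) ≤
          (if (cyc j).Mem (x, y) then (G.get (Fin.cast h j)).flux else 0)
            - (if (cyc j).Mem (x, y) then f0 j else 0) := by
        intro j
        by_cases hj : (cyc j).Mem (x, y)
        · rw [if_pos hj, if_pos hj]
          exact sub_nonneg.2 (hleG j)
        · rw [if_neg hj, if_neg hj, sub_zero]
      calc (G.get (Fin.cast h i)).flux - f0 i
          = (if (cyc i).Mem (x, y) then (G.get (Fin.cast h i)).flux else 0)
            - (if (cyc i).Mem (x, y) then f0 i else 0) := by rw [if_pos hmem, if_pos hmem]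
        _ ≤ ∑ j : Fin F0.length,
            ((if (cyc j).Mem (x, y) then (G.get (Fin.cast h j)).flux else 0)
              - (if (cyc j).Mem (x, y) then f0 j else 0)) :=
            Finset.single_le_sum (fun j _ => hterm j) (Finset.mem_univ i)
    have hcap := hfeasG x y
    simp only [resid]
    linarith
  have keyresI : ∀ i : Fin F0.length, 0 < fI i - f0 i →
      ∀ x y, (cyc i).Mem (x, y) → 0 < resid c F0 x y := by
    intro i hpos
    have hLI' : ∀ u v, edgeLoad FI u v = ∑ i : Fin F0.length,
        if (cyc i).Mem (u, v) then (FI.get (Fin.cast hlen2 i)).flux else 0 := by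
      intro u v; have := hLI u v; rw [hfIdef] at this; exact this
    refine keyres FI hlen2 hfI hLI' ?_ i ?_
    · intro j; have := hleI j; rw [hfIdef] at this; exact this
    · have := hpos; rw [hfIdef] at this; exact this
  have keyresIJ : ∀ i : Fin F0.length, 0 < fIJ i - f0 i →
      ∀ x y, (cyc i).Mem (x, y) → 0 < resid c F0 x y := by
    intro i hpos
    have hLIJ' : ∀ u v, edgeLoad FIJ u v = ∑ i : Fin F0.length,
        if (cyc i).Mem (u, v) then (FIJ.get (Fin.cast hlen1 i)).flux else 0 := by
      intro u v; have := hLIJ u v; rw [hfIJdef] at this; exact this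
    refine keyres FIJ hlen1 hfIJ hLIJ' ?_ i ?_
    · intro j; have := hleIJ j; rw [hfIJdef] at this; exact this
    · have := hpos; rw [hfIJdef] at this; exact this
  have spreadI : ∀ i : Fin F0.length, 0 < fI i - f0 i → T (cyc i) →
      ∀ j, ((cyc i).edge j).1 ∈ A ∧ ((cyc i).edge j).2 ∈ A := by
    intro i hpos hT
    refine cycle_spread hsymm hAcl (fun j => ?_) ?_
    · exact hrdef ▸ Or.inl (keyresI i hpos _ _ ⟨j, rfl⟩)
    · rw [hTdef] at hT; exact hT
  have spreadIJ : ∀ i : Fin F0.length, 0 < fIJ i - f0 i → T (cyc i) →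
      ∀ j, ((cyc i).edge j).1 ∈ A ∧ ((cyc i).edge j).2 ∈ A := by
    intro i hpos hT
    refine cycle_spread hsymm hAcl (fun j => ?_) ?_
    · exact hrdef ▸ Or.inl (keyresIJ i hpos _ _ ⟨j, rfl⟩)
    · rw [hTdef] at hT; exact hT
  -- the combined flow
  refine ⟨F0 ++ List.ofFn (fun i => ⟨cyc i, dI i, hdI0 i⟩)
    ++ List.ofFn (fun i => ⟨cyc i, dK i, hdK0 i⟩), ?_, ?_, ?_⟩
  · -- Feasible
    intro u v
    rw [edgeLoad_append, edgeLoad_append, edgeLoad_ofFn, edgeLoad_ofFn]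
    dsimp only
    have hnnI : (0:ℝ) ≤ ∑ i : Fin F0.length, if (cyc i).Mem (u, v) then dI i else 0 := by
      refine Finset.sum_nonneg fun i _ => ?_
      split_ifs
      · exact hdI0 i
      · exact le_refl 0
    by_cases hposI : 0 < ∑ i : Fin F0.length, if (cyc i).Mem (u, v) then dI i else 0
    · -- u ∈ A, so the dK sum vanishes
      obtain ⟨i, hi⟩ := pos_term_of_pos_sum hposI
      have hmemi : (cyc i).Mem (u, v) := by
        by_contra hcon
        rw [if_neg hcon] at hi
        exact lt_irrefl 0 hi
      rw [if_pos hmemi] at hi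
      have hTi : T (cyc i) ∧ 0 < fI i - f0 i := by
        simp only [hdIdef] at hi
        by_cases hT : T (cyc i)
        · rw [if_pos hT] at hi; exact ⟨hT, hi⟩
        · rw [if_neg hT] at hi; exact absurd hi (lt_irrefl 0)
      have huA : u ∈ A := by
        obtain ⟨j, hj⟩ := hmemi
        have := (spreadI i hTi.2 hTi.1 j).1
        rwa [hj] at this
      have hK0 : (∑ i : Fin F0.length, if (cyc i).Mem (u, v) then dK i else 0) = 0 := by
        refine Finset.sum_eq_zero fun i' _ => ?_
        by_cases hm : (cyc i').Mem (u, v)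
        · rw [if_pos hm]
          simp only [hdKdef]
          by_cases hT' : T (cyc i')
          · rw [if_pos hT']
          · rw [if_neg hT']
            by_contra hne
            have hpos' : 0 < fIJ i' - f0 i' :=
              lt_of_le_of_ne (sub_nonneg.2 (hleIJ i')) (Ne.symm hne)
            obtain ⟨j, hj⟩ := hm
            have hr : r u v := by
              rw [hrdef]
              exact Or.inl (keyresIJ i' hpos' u v ⟨j, hj⟩)
            have hvA : v ∈ A := hAcl u v huA hr
            refine hT' ?_
            rw [hTdef]
            exact ⟨j, by rw [hj]; exact hvA⟩
        · rw [if_neg hm]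
      rw [hK0, add_zero]
      have hle : edgeLoad F0 u v
          + (∑ i : Fin F0.length, if (cyc i).Mem (u, v) then dI i else 0)
          ≤ edgeLoad FI u v := by
        rw [hL0, hLI, ← Finset.sum_add_distrib]
        refine Finset.sum_le_sum fun i' _ => ?_
        by_cases hm : (cyc i').Mem (u, v)
        · rw [if_pos hm, if_pos hm, if_pos hm]
          simp only [hdIdef]
          split_ifs
          · linarith
          · linarith [hleI i']
        · rw [if_neg hm, if_neg hm, if_neg hm, add_zero]
      linarith [hfI u v]
    · have hI0 : (∑ i : Fin F0.length, if (cyc i).Mem (u, v) then dI i else 0) = 0 :=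
        le_antisymm (not_lt.1 hposI) hnnI
      rw [hI0, add_zero]
      have hle : edgeLoad F0 u v
          + (∑ i : Fin F0.length, if (cyc i).Mem (u, v) then dK i else 0)
          ≤ edgeLoad FIJ u v := by
        rw [hL0, hLIJ, ← Finset.sum_add_distrib]
        refine Finset.sum_le_sum fun i' _ => ?_
        by_cases hm : (cyc i').Mem (u, v)
        · rw [if_pos hm, if_pos hm, if_pos hm]
          simp only [hdKdef]
          split_ifs
          · linarith [hleIJ i']
          · linarith
        · rw [if_neg hm, if_neg hm, if_neg hm, add_zero]
      linarith [hfIJ u v]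
  · -- mflux through I
    rw [mflux_append, mflux_append, mflux_ofFn, mflux_ofFn]
    dsimp only
    have h0 : mflux F0 I (bdry \ I) = ∑ i : Fin F0.length,
        if (cyc i).Visits I ∧ (cyc i).Visits (bdry \ I) then f0 i else 0 := by
      rw [mflux_eq_sum]
      exact Finset.sum_congr rfl fun i _ => by rw [hcycdef, hf0def]
    have hFIm : mflux FI I (bdry \ I) = ∑ i : Fin F0.length,
        if (cyc i).Visits I ∧ (cyc i).Visits (bdry \ I) then fI i else 0 := by
      rw [mflux_reidx FI hlen2]
      exact Finset.sum_congr rfl fun i _ => by rw [hcycI, hfIdef]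
    rw [h0, ← Finset.sum_add_distrib, ← Finset.sum_add_distrib]
    rw [← hmI, hFIm]
    refine Finset.sum_congr rfl fun i _ => ?_
    by_cases hv : (cyc i).Visits I ∧ (cyc i).Visits (bdry \ I)
    · rw [if_pos hv, if_pos hv, if_pos hv, if_pos hv]
      have hTi : T (cyc i) := by
        rw [hTdef]
        obtain ⟨j, hj⟩ := hv.1
        exact ⟨j, hIA _ hj⟩
      simp only [hdIdef, hdKdef, if_pos hTi]
      ring
    · rw [if_neg hv, if_neg hv, if_neg hv, if_neg hv, add_zero, add_zero]
  · -- mflux through I ∪ J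
    rw [mflux_append, mflux_append, mflux_ofFn, mflux_ofFn]
    dsimp only
    have h0 : mflux F0 (I ∪ J) (bdry \ (I ∪ J)) = ∑ i : Fin F0.length,
        if (cyc i).Visits (I ∪ J) ∧ (cyc i).Visits (bdry \ (I ∪ J)) then f0 i else 0 := by
      rw [mflux_eq_sum]
      exact Finset.sum_congr rfl fun i _ => by rw [hcycdef, hf0def]
    have hFIJm : mflux FIJ (I ∪ J) (bdry \ (I ∪ J)) = ∑ i : Fin F0.length,
        if (cyc i).Visits (I ∪ J) ∧ (cyc i).Visits (bdry \ (I ∪ J)) then fIJ i else 0 := by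
      rw [mflux_reidx FIJ hlen1]
      exact Finset.sum_congr rfl fun i _ => by rw [hcycIJ, hfIJdef]
    rw [h0, ← Finset.sum_add_distrib, ← Finset.sum_add_distrib]
    rw [← hmIJ, hFIJm]
    refine Finset.sum_congr rfl fun i _ => ?_
    by_cases hv : (cyc i).Visits (I ∪ J) ∧ (cyc i).Visits (bdry \ (I ∪ J))
    · rw [if_pos hv, if_pos hv, if_pos hv, if_pos hv]
      obtain ⟨j, hbj⟩ := hv.2
      have hbA : ((cyc i).edge j).2 ∉ A := hKA _ hbj
      have hdIi : dI i = 0 := by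
        simp only [hdIdef]
        split_ifs with hT
        · by_contra hne
          have hp : 0 < fI i - f0 i :=
            lt_of_le_of_ne (sub_nonneg.2 (hleI i)) (Ne.symm hne)
          exact hbA (spreadI i hp hT j).2
        · rfl
      have hdKi : f0 i + dK i = fIJ i := by
        simp only [hdKdef]
        split_ifs with hT
        · have hz : fIJ i - f0 i = 0 := by
            by_contra hne
            have hp : 0 < fIJ i - f0 i :=
              lt_of_le_of_ne (sub_nonneg.2 (hleIJ i)) (Ne.symm hne)
            exact hbA (spreadIJ i hp hT j).2
          linarith
        · ring
      linarith
    · rw [if_neg hv, if_neg hv, if_neg hv, if_neg hv, add_zero, add_zero]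

end Lemmas8

/-- Characterization of the existence of a nested multi-cycle flow simultaneously
maximizing the flux through `I` and through `I ∪ J`. -/
theorem stmt4 {V : Type*} [Fintype V] [DecidableEq V] (c : V → V → ℝ)
    (hc : ∀ u v, 0 ≤ c u v) (hbal : BalancedNet c)
    (bdry I J : Finset V) (hI : I ⊆ bdry) (hJ : J ⊆ bdry) (hIJ : Disjoint I J) :
    (∃ F : List (CycleFlow V), Feasible c F ∧
        mflux F I (bdry \ I) = entropy c bdry I ∧
        mflux F (I ∪ J) (bdry \ (I ∪ J)) = entropy c bdry (I ∪ J)) ↔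
      (∃ FIJ FI F0 : List (CycleFlow V),
        Feasible c FIJ ∧
        mflux FIJ (I ∪ J) (bdry \ (I ∪ J)) = entropy c bdry (I ∪ J) ∧
        Feasible c FI ∧
        mflux FI I (bdry \ I) = entropy c bdry I ∧
        Feasible c F0 ∧ Subflow F0 FIJ ∧ Subflow F0 FI ∧
        ∀ a ∈ I, ∀ b ∈ bdry \ (I ∪ J),
          ¬ Relation.ReflTransGen
              (fun x y => 0 < resid c F0 x y ∨ 0 < resid c F0 y x) a b) := by
  rename_i instDec
  have hinst : instDec = fun a b => Classical.propDecidable (a = b) := Subsingleton.elim _ _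
  subst hinst
  constructor
  · rintro ⟨F, hF, h1, h2⟩
    obtain ⟨F', hF', h1', h2', hsep⟩ := improve hc hbal bdry I J
      (Finset.univ.filter (fun p : V × V => 0 < resid c F p.1 p.2)).card F hF h1 h2 le_rfl
    have hrefl : Subflow F' F' := List.forall₂_same.2 (fun x _ => ⟨rfl, le_rfl⟩)
    exact ⟨F', F', F', hF', h2', hF', h1', hF', hrefl, hrefl, hsep⟩
  · rintro ⟨FIJ, FI, F0, hfIJ, hmIJ, hfI, hmI, hfF0, hsub1, hsub2, hsep⟩
    exact backward bdry I J FIJ FI F0 hfIJ hmIJ hfI hmI hsub1 hsub2 hsep
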